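/- Let A = ℤ[1/6][X, Y] and Δ' = X³ − Y². The element 1/(X·Δ') of the localization A[1/(XΔ')] does not lie in the A-submodule generated by the images of A[1/Δ'] and A[1/X]; in particular the quotient A-module A[1/(XΔ')]/(im A[1/Δ'] + im A[1/X]) is nonzero. Moreover, every element of this quotient module is annihilated by some power of X·Δ'. (This quotient computes the nonzero first Čech cohomology H¹ of the compactified moduli stack of elliptic curves over ℤ[1/6], which contributes the torsion-free divisible pattern generated by the class θ in π₋₂₁ Tmf[1/6].) -/

import Mathlib

open MvPolynomial

noncomputable def phi0 (R : Type*) [CommRing R] :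
    MvPolynomial (Fin 2) R →ₐ[R] MvPolynomial (Fin 2) R :=
  aeval (fun i : Fin 2 => if i = 0 then 0 else X i)

lemma phi0_X0 (R : Type*) [CommRing R] : phi0 R (X 0) = 0 := by
  simp [phi0]

lemma phi0_X1 (R : Type*) [CommRing R] : phi0 R (X 1) = X 1 := by
  simp [phi0]

lemma X0_dvd_sub_phi0 {R : Type*} [CommRing R] (b : MvPolynomial (Fin 2) R) :
    (X 0 : MvPolynomial (Fin 2) R) ∣ (b - phi0 R b) := by
  induction b using MvPolynomial.induction_on with
  | C a => simp [phi0]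
  | add p q hp hq =>
      have : p + q - phi0 R (p + q) = (p - phi0 R p) + (q - phi0 R q) := by
        rw [map_add]; ring
      rw [this]; exact dvd_add hp hq
  | mul_X p i hp =>
      by_cases h : i = 0
      · subst h
        have : p * X 0 - phi0 R (p * X 0) = p * X 0 := by
          rw [map_mul, phi0_X0, mul_zero, sub_zero]
        rw [this]; exact dvd_mul_left _ _
      · have hXi : phi0 R (X i) = X i := by simp [phi0, h]
        have : p * X i - phi0 R (p * X i) = (p - phi0 R p) * X i := by
          rw [map_mul, hXi]; ring
        rw [this]; exact hp.mul_right _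

lemma phi0_d {R : Type*} [CommRing R] :
    phi0 R ((X 0 : MvPolynomial (Fin 2) R) ^ 3 - X 1 ^ 2) = -(X 1 ^ 2) := by
  rw [map_sub, map_pow, map_pow, phi0_X0, phi0_X1]
  ring

lemma key_nonmem {R : Type*} [CommRing R] [IsDomain R] (n : ℕ) :
    ∀ (m : ℕ) (a b : MvPolynomial (Fin 2) R),
      (X 0 : MvPolynomial (Fin 2) R) ^ m * (X 0 ^ 3 - X 1 ^ 2) ^ n ≠
        a * X 0 ^ (m + 1) + b * (X 0 ^ 3 - X 1 ^ 2) ^ (n + 1) := by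
  have hX1 : ((X 1 : MvPolynomial (Fin 2) R)) ^ 2 ≠ 0 :=
    pow_ne_zero _ (X_ne_zero 1)
  have he : (-(X 1 ^ 2) : MvPolynomial (Fin 2) R) ≠ 0 := by
    simpa using hX1
  intro m
  induction m with
  | zero =>
      intro a b h
      have h0 := congrArg (phi0 R) h
      simp only [map_add, map_mul, map_pow, phi0_X0, phi0_d, pow_zero, one_mul, pow_one,
        mul_zero, zero_add] at h0
      -- h0 : (-(X 1 ^ 2)) ^ n = phi0 R b * (-(X 1 ^ 2)) ^ (n + 1)
      have hfac : ((-(X 1 ^ 2) : MvPolynomial (Fin 2) R)) ^ n *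
          (1 - phi0 R b * (-(X 1 ^ 2))) = 0 := by
        rw [pow_succ] at h0; linear_combination h0
      rcases mul_eq_zero.mp hfac with h1 | h1
      · exact pow_ne_zero _ he h1
      · have hunit : phi0 R b * (-(X 1 ^ 2) : MvPolynomial (Fin 2) R) = 1 := by
          linear_combination -h1
        have := congrArg (aeval (fun _ : Fin 2 => (0 : R))) hunit
        simp at this
  | succ m ih =>
      intro a b h
      have h0 := congrArg (phi0 R) h
      simp only [map_add, map_mul, map_pow, phi0_X0, phi0_d,
        zero_pow (Nat.succ_ne_zero m), zero_pow (Nat.succ_ne_zero (m + 1)),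
        zero_mul, mul_zero, zero_add] at h0
      -- h0 : 0 = phi0 R b * (-(X 1 ^ 2)) ^ (n + 1)
      have hb0 : phi0 R b = 0 := by
        rcases mul_eq_zero.mp h0.symm with h1 | h1
        · exact h1
        · exact absurd h1 (pow_ne_zero _ he)
      obtain ⟨b', hb'⟩ : (X 0 : MvPolynomial (Fin 2) R) ∣ b := by
        have := X0_dvd_sub_phi0 b
        rwa [hb0, sub_zero] at this
      apply ih a b'
      have hX0 : (X 0 : MvPolynomial (Fin 2) R) ≠ 0 := X_ne_zero 0
      apply mul_left_cancel₀ hX0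
      subst hb'
      linear_combination h


/-- Let `A = ℤ[1/6][X, Y]` (with `X` playing the role of the modular form `c₄` and `Y` that of
`c₆`) and `Δ' = X³ − Y²`.  In `A[1/(X·Δ')]`, the element `1/(X·Δ')` does not lie in the
`A`-submodule generated by the images of `A[1/Δ']` and `A[1/X]`; in particular the quotient
`A`-module is nonzero.  Moreover, every element of this quotient is annihilated by some power of
`X·Δ'`.  Here `ℤ[1/6]` is any realization `R6` of the localization of `ℤ` away from `6`, and the
three localizations of `A` are likewise arbitrary realizations. -/
theorem cech_h1_nonzero_and_torsion
    (R6 : Type*) [CommRing R6] [IsLocalization.Away (6 : ℤ) R6]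
    (LΔ LX LXΔ : Type*) [CommRing LΔ] [CommRing LX] [CommRing LXΔ]
    [Algebra (MvPolynomial (Fin 2) R6) LΔ] [Algebra (MvPolynomial (Fin 2) R6) LX]
    [Algebra (MvPolynomial (Fin 2) R6) LXΔ]
    [IsLocalization.Away (X 0 ^ 3 - X 1 ^ 2 : MvPolynomial (Fin 2) R6) LΔ]
    [IsLocalization.Away (X 0 : MvPolynomial (Fin 2) R6) LX]
    [IsLocalization.Away ((X 0 : MvPolynomial (Fin 2) R6) * (X 0 ^ 3 - X 1 ^ 2)) LXΔ]
    (M : Submodule (MvPolynomial (Fin 2) R6) LXΔ)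
    (hM : M = Submodule.span (MvPolynomial (Fin 2) R6)
      (Set.range ⇑(IsLocalization.Away.awayToAwayLeft (S := LΔ) (P := LXΔ)
          (X 0 ^ 3 - X 1 ^ 2 : MvPolynomial (Fin 2) R6) (X 0)) ∪
        Set.range ⇑(IsLocalization.Away.awayToAwayRight (S := LX) (P := LXΔ)
          (X 0 : MvPolynomial (Fin 2) R6) (X 0 ^ 3 - X 1 ^ 2)))) :
    (IsLocalization.Away.invSelf (S := LXΔ)
        ((X 0 : MvPolynomial (Fin 2) R6) * (X 0 ^ 3 - X 1 ^ 2)) ∉ M) ∧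
      Nontrivial (LXΔ ⧸ M) ∧
      ∀ z : LXΔ,
        ∃ n : ℕ, ((X 0 : MvPolynomial (Fin 2) R6) * (X 0 ^ 3 - X 1 ^ 2)) ^ n • z ∈ M := by
  haveI : IsDomain R6 :=
    IsLocalization.isDomain_of_le_nonZeroDivisors (R := ℤ) (S := R6)
      (hM := powers_le_nonZeroDivisors_of_noZeroDivisors (by norm_num : (6 : ℤ) ≠ 0))
  set A := MvPolynomial (Fin 2) R6 with hA
  set p : A := X 0 with hp
  set d : A := X 0 ^ 3 - X 1 ^ 2 with hd
  set w : A := p * d with hwdef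
  have hdne : d ≠ 0 := by
    intro h
    have := congrArg (aeval (fun i : Fin 2 => if i = 0 then (1 : R6) else 0)) h
    simp [hd] at this
  have hwne : w ≠ 0 := mul_ne_zero (X_ne_zero 0) hdne
  set φ := algebraMap A LXΔ with hφ
  have hinj : Function.Injective φ :=
    IsLocalization.injective LXΔ (powers_le_nonZeroDivisors_of_noZeroDivisors hwne)
  -- the two maps, as `A`-algebra homs
  set f : LΔ →+* LXΔ :=
    IsLocalization.Away.awayToAwayLeft (S := LΔ) (P := LXΔ) d p with hf
  set g : LX →+* LXΔ :=
    IsLocalization.Away.awayToAwayRight (S := LX) (P := LXΔ) p d with hg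
  let f' : LΔ →ₐ[A] LXΔ :=
    { f with commutes' := fun r => IsLocalization.Away.awayToAwayLeft_eq d p r }
  let g' : LX →ₐ[A] LXΔ :=
    { g with commutes' := fun r => IsLocalization.Away.awayToAwayRight_eq p d r }
  have hfr : ∀ r : A, f (algebraMap A LΔ r) = φ r := fun r =>
    IsLocalization.Away.awayToAwayLeft_eq d p r
  have hnonmem : IsLocalization.Away.invSelf (S := LXΔ) w ∉ M := by
    intro hmem
    rw [hM] at hmem
    have hle : Submodule.span A (Set.range ⇑f ∪ Set.range ⇑g) ≤
        Subalgebra.toSubmodule f'.range ⊔ Subalgebra.toSubmodule g'.range := by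
      rw [Submodule.span_le]
      rintro x (⟨s, rfl⟩ | ⟨t, rfl⟩)
      · exact Submodule.mem_sup_left ⟨s, rfl⟩
      · exact Submodule.mem_sup_right ⟨t, rfl⟩
    obtain ⟨u, hu, v, hv, huv⟩ := Submodule.mem_sup.mp (hle hmem)
    obtain ⟨s, rfl⟩ := hu
    obtain ⟨t, rfl⟩ := hv
    obtain ⟨⟨a, sd⟩, heq1⟩ := IsLocalization.surj (M := Submonoid.powers d) (S := LΔ) s
    obtain ⟨n, hn⟩ := sd.2
    obtain ⟨⟨b, sx⟩, heq2⟩ := IsLocalization.surj (M := Submonoid.powers p) (S := LX) t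
    obtain ⟨m, hm⟩ := sx.2
    -- push to LXΔ
    have h1 : f' s * φ (d ^ n) = φ a := by
      have := congrArg f' heq1
      rw [map_mul, AlgHom.commutes, AlgHom.commutes] at this
      rwa [← hn] at this
    have h2 : g' t * φ (p ^ m) = φ b := by
      have := congrArg g' heq2
      rw [map_mul, AlgHom.commutes, AlgHom.commutes] at this
      rwa [← hm] at this
    have h3 : φ w * IsLocalization.Away.invSelf (S := LXΔ) w = 1 :=
      IsLocalization.Away.mul_invSelf w
    have huv' : f' s + g' t = IsLocalization.Away.invSelf (S := LXΔ) w := huv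
    have keyEq : φ p ^ m * φ d ^ n =
        (φ a * φ d) * φ p ^ (m + 1) + (φ b * φ p) * φ d ^ (n + 1) := by
      have h1' : f' s * φ d ^ n = φ a := by rw [← map_pow]; exact h1
      have h2' : g' t * φ p ^ m = φ b := by rw [← map_pow]; exact h2
      have h3' : φ p * φ d * IsLocalization.Away.invSelf (S := LXΔ) w = 1 := by
        rw [← map_mul]; exact h3
      linear_combination (φ d * φ p ^ (m + 1)) * h1' + (φ p * φ d ^ (n + 1)) * h2' -
        (φ p ^ m * φ d ^ n) * h3' - (φ p ^ (m + 1) * φ d ^ (n + 1)) * huv'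
    have hA' : p ^ m * d ^ n = (a * d) * p ^ (m + 1) + (b * p) * d ^ (n + 1) := by
      apply hinj
      simp only [map_add, map_mul, map_pow]
      linear_combination keyEq
    exact key_nonmem n m (a * d) (b * p) hA'
  refine ⟨hnonmem, ?_, ?_⟩
  · exact ⟨Submodule.Quotient.mk (IsLocalization.Away.invSelf (S := LXΔ) w), 0,
      fun h => hnonmem ((Submodule.Quotient.mk_eq_zero M).mp h)⟩
  · intro z
    obtain ⟨⟨r, s⟩, heq⟩ := IsLocalization.surj (M := Submonoid.powers w) (S := LXΔ) z
    obtain ⟨n, hn⟩ := s.2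
    refine ⟨n, ?_⟩
    have hn' : (s : A) = w ^ n := hn.symm
    have heq' : z * φ (w ^ n) = φ r := by rw [← hn']; exact heq
    have hz : w ^ n • z = φ r := by rw [Algebra.smul_def, mul_comm]; exact heq'
    rw [hz, hM]
    exact Submodule.subset_span (Or.inl ⟨algebraMap A LΔ r, hfr r⟩)
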